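/- For the layer-normalized loss L(W) = E[ℓ(y, W_U (Wx/‖Wx‖))], the gradient equals ∇_W L(W) = ∑_{k=1}^N E_x[((p̂_W(k|x) - p(y=k|x))/‖Wx‖) · (I - (Wx)(Wx)^⊤/‖Wx‖²) w_U(k) x^⊤], i.e., each update direction w_U(k)x^⊤ is projected orthogonally to the current output direction Wx. -/

import Mathlib

open Finset

noncomputable def softmax {N : ℕ} (ξ : Fin N → ℝ) (k : Fin N) : ℝ :=
  Real.exp (ξ k) / ∑ j, Real.exp (ξ j)

noncomputable def crossEntropy {N : ℕ} (y : Fin N) (ξ : Fin N → ℝ) : ℝ :=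
  - Real.log (softmax ξ y)

/-- `(W v) a = ∑ b, W a b * v b`. -/
noncomputable def mulVec' {d e : ℕ} (W : Fin d → Fin e → ℝ) (v : Fin e → ℝ) : Fin d → ℝ :=
  fun a => ∑ b, W a b * v b

/-- Euclidean norm on `ℝ^d`. -/
noncomputable def nrm {d : ℕ} (v : Fin d → ℝ) : ℝ := Real.sqrt (∑ a, (v a) ^ 2)

/-- Update the `(a,b)` entry of a matrix to the value `s`. -/
def updEntry {d e : ℕ} (W : Fin d → Fin e → ℝ) (a : Fin d) (b : Fin e) (s : ℝ) :
    Fin d → Fin e → ℝ :=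
  Function.update W a (Function.update (W a) b s)

open Classical in
lemma cond_sum_eq {N d : ℕ} {Ω : Type} [Fintype Ω]
    (p : Ω → ℝ) (hp0 : ∀ ω, 0 ≤ p ω)
    (X : Ω → Fin d → ℝ) (Y : Ω → Fin N) (k : Fin N)
    (G : Ω → ℝ) (hG : ∀ ω ω', X ω = X ω' → G ω = G ω')
    (pcond : Ω → Fin N → ℝ)
    (hpcond : ∀ ω, pcond ω k =
      (∑ ω' ∈ univ.filter (fun ω' => X ω' = X ω ∧ Y ω' = k), p ω') /
      (∑ ω' ∈ univ.filter (fun ω' => X ω' = X ω), p ω')) :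
    ∑ ω, p ω * pcond ω k * G ω = ∑ ω, p ω * (if Y ω = k then 1 else 0) * G ω := by
  classical
  rw [← Finset.sum_fiberwise_of_maps_to (g := X) (t := univ.image X)
      (fun ω _ => Finset.mem_image_of_mem X (mem_univ ω)) (fun ω => p ω * pcond ω k * G ω),
      ← Finset.sum_fiberwise_of_maps_to (g := X) (t := univ.image X)
      (fun ω _ => Finset.mem_image_of_mem X (mem_univ ω))
      (fun ω => p ω * (if Y ω = k then 1 else 0) * G ω)]
  refine Finset.sum_congr rfl fun x hx => ?_
  obtain ⟨ω₀, -, hω₀⟩ := Finset.mem_image.mp hx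
  have hfib : ∀ ω ∈ univ.filter (fun ω => X ω = x),
      p ω * pcond ω k * G ω = p ω *
        ((∑ ω' ∈ univ.filter (fun ω' => X ω' = x ∧ Y ω' = k), p ω') /
         (∑ ω' ∈ univ.filter (fun ω' => X ω' = x), p ω')) * G ω₀ := by
    intro ω hω
    have hXω : X ω = x := by simpa using (Finset.mem_filter.mp hω).2
    rw [hpcond ω, hG ω ω₀ (by rw [hXω, hω₀]), hXω]
  have hfib' : ∀ ω ∈ univ.filter (fun ω => X ω = x),
      p ω * (if Y ω = k then 1 else 0) * G ω
        = p ω * (if Y ω = k then 1 else 0) * G ω₀ := by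
    intro ω hω
    have hXω : X ω = x := by simpa using (Finset.mem_filter.mp hω).2
    rw [hG ω ω₀ (by rw [hXω, hω₀])]
  rw [Finset.sum_congr rfl hfib, Finset.sum_congr rfl hfib']
  set A := ∑ ω' ∈ univ.filter (fun ω' => X ω' = x), p ω' with hA
  set B := ∑ ω' ∈ univ.filter (fun ω' => X ω' = x ∧ Y ω' = k), p ω' with hB
  have hkey : ∑ ω ∈ univ.filter (fun ω => X ω = x), p ω * (if Y ω = k then 1 else 0) = B := by
    calc ∑ ω ∈ univ.filter (fun ω => X ω = x), p ω * (if Y ω = k then 1 else 0)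
        = ∑ ω ∈ univ.filter (fun ω => X ω = x), if Y ω = k then p ω else 0 :=
          Finset.sum_congr rfl fun ω _ => by by_cases h : Y ω = k <;> simp [h]
      _ = ∑ ω ∈ (univ.filter (fun ω => X ω = x)).filter (fun ω => Y ω = k), p ω :=
          (Finset.sum_filter _ _).symm
      _ = B := by rw [Finset.filter_filter, hB]
  have hrhs : ∑ ω ∈ univ.filter (fun ω => X ω = x),
      p ω * (if Y ω = k then 1 else 0) * G ω₀ = B * G ω₀ := by
    rw [← hkey, Finset.sum_mul]
  rw [hrhs]
  by_cases hA0 : A = 0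
  · have hA0' : ∑ ω' ∈ univ.filter (fun ω' => X ω' = x), p ω' = 0 := by rw [← hA]; exact hA0
    have hz : ∀ ω ∈ univ.filter (fun ω => X ω = x), p ω = 0 := fun ω hω =>
      (Finset.sum_eq_zero_iff_of_nonneg (fun ω _ => hp0 ω)).mp hA0' ω hω
    have hB0 : B = 0 := by
      rw [← hkey]
      exact Finset.sum_eq_zero fun ω hω => by rw [hz ω hω, zero_mul]
    rw [hB0, zero_mul]
    exact Finset.sum_eq_zero fun ω hω => by rw [hz ω hω]; ring
  · have : ∑ ω ∈ univ.filter (fun ω => X ω = x), p ω * (B / A) * G ω₀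
        = A * (B / A) * G ω₀ := by
      rw [← Finset.sum_mul, ← Finset.sum_mul, ← hA]
    rw [this]
    field_simp

open Classical in
lemma per_omega_deriv {N d : ℕ} (wU : Fin N → Fin d → ℝ) (W : Fin d → Fin d → ℝ)
    (x : Fin d → ℝ) (y : Fin N) (a : Fin d) (b : Fin d)
    (hv0 : mulVec' W x ≠ 0) :
    HasDerivAt (fun s : ℝ => crossEntropy y
      (fun k => ∑ i, wU k i * (mulVec' (updEntry W a b s) x i / nrm (mulVec' (updEntry W a b s) x))))
      (∑ k, (softmax (fun k' => ∑ i, wU k' i * (mulVec' W x i / nrm (mulVec' W x))) k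
          - (if y = k then 1 else 0)) *
        ((wU k a - mulVec' W x a * (∑ i, mulVec' W x i * wU k i) / (nrm (mulVec' W x)) ^ 2)
          * x b / nrm (mulVec' W x)))
      (W a b) := by
  classical
  have hupd : updEntry W a b (W a b) = W := by
    unfold updEntry
    rw [Function.update_eq_self, Function.update_eq_self]
  set v : Fin d → ℝ := mulVec' W x with hvdef
  obtain ⟨i₀, hi₀⟩ : ∃ i, v i ≠ 0 := Function.ne_iff.mp hv0
  have hq0 : (0:ℝ) < ∑ i, v i ^ 2 :=
    Finset.sum_pos' (fun i _ => sq_nonneg _) ⟨i₀, mem_univ _, by positivity⟩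
  have hnpos : 0 < nrm v := by rw [nrm]; exact Real.sqrt_pos.mpr hq0
  have hn0 : nrm v ≠ 0 := hnpos.ne'
  -- step 1 : entrywise derivative of W ↦ Wx
  have hv : ∀ i, HasDerivAt (fun s => mulVec' (updEntry W a b s) x i)
      ((if i = a then (1:ℝ) else 0) * x b) (W a b) := by
    intro i
    have heq : (fun s => mulVec' (updEntry W a b s) x i)
        = fun s => ∑ j, (if i = a ∧ j = b then s else W i j) * x j := by
      funext s
      unfold mulVec' updEntry
      refine Finset.sum_congr rfl fun j _ => ?_
      by_cases hia : i = a <;> by_cases hjb : j = b <;>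
        simp [Function.update_apply, hia, hjb]
    rw [heq]
    have h1 : HasDerivAt (fun s : ℝ => ∑ j, (if i = a ∧ j = b then s else W i j) * x j)
        (∑ j, if i = a ∧ j = b then x j else 0) (W a b) := by
      refine HasDerivAt.fun_sum fun j _ => ?_
      by_cases h : i = a ∧ j = b
      · simpa [h] using (hasDerivAt_id (W a b)).mul_const (x j)
      · simpa [h] using hasDerivAt_const (W a b) (W i j * x j)
    convert h1 using 1
    by_cases hia : i = a <;> simp [hia, Finset.sum_ite_eq']
  -- step 2 : derivative of the norm
  have hnd : HasDerivAt (fun s => nrm (mulVec' (updEntry W a b s) x))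
      (v a * x b / nrm v) (W a b) := by
    have hq : HasDerivAt (fun s => ∑ i, (mulVec' (updEntry W a b s) x i) ^ 2)
        (∑ i, 2 * v i * ((if i = a then (1:ℝ) else 0) * x b)) (W a b) := by
      refine HasDerivAt.fun_sum fun i _ => ?_
      have := (hv i).fun_pow 2
      simpa [hupd, hvdef] using this
    have hqne : ∑ i, (mulVec' (updEntry W a b (W a b)) x i) ^ 2 ≠ 0 := by
      rw [hupd]; exact hq0.ne'
    have := hq.sqrt hqne
    have heq : (fun s => Real.sqrt (∑ i, (mulVec' (updEntry W a b s) x i) ^ 2))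
        = fun s => nrm (mulVec' (updEntry W a b s) x) := by
      funext s; rw [nrm]
    rw [heq] at this
    convert this using 1
    rw [hupd]
    have hsum : ∑ i, 2 * v i * ((if i = a then (1:ℝ) else 0) * x b) = 2 * v a * x b := by
      rw [Finset.sum_congr rfl (fun i _ => show 2 * v i * ((if i = a then (1:ℝ) else 0) * x b)
          = if i = a then 2 * v i * x b else 0 by by_cases h : i = a <;> simp [h] <;> ring)]
      simp [Finset.sum_ite_eq']
    rw [hsum]
    have : Real.sqrt (∑ i, v i ^ 2) = nrm v := rfl
    rw [show Real.sqrt (∑ i, v i ^ 2) = nrm v from rfl]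
    field_simp
  -- step 3 : derivative of each normalized coordinate
  have hu : ∀ i, HasDerivAt (fun s => mulVec' (updEntry W a b s) x i / nrm (mulVec' (updEntry W a b s) x))
      (((if i = a then (1:ℝ) else 0) * x b * nrm v - v i * (v a * x b / nrm v)) / nrm v ^ 2)
      (W a b) := by
    intro i
    have := (hv i).fun_div hnd (by rw [hupd]; exact hn0)
    simpa [hupd] using this
  -- step 4 : derivative of the logits
  have hxi : ∀ k, HasDerivAt (fun s => ∑ i, wU k i *
        (mulVec' (updEntry W a b s) x i / nrm (mulVec' (updEntry W a b s) x)))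
      ((wU k a - v a * (∑ i, v i * wU k i) / nrm v ^ 2) * x b / nrm v) (W a b) := by
    intro k
    have h1 : HasDerivAt (fun s => ∑ i, wU k i *
          (mulVec' (updEntry W a b s) x i / nrm (mulVec' (updEntry W a b s) x)))
        (∑ i, wU k i * (((if i = a then (1:ℝ) else 0) * x b * nrm v
          - v i * (v a * x b / nrm v)) / nrm v ^ 2)) (W a b) :=
      HasDerivAt.fun_sum fun i _ => (hu i).const_mul (wU k i)
    convert h1 using 1
    have hterm : ∀ i, wU k i * (((if i = a then (1:ℝ) else 0) * x b * nrm v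
          - v i * (v a * x b / nrm v)) / nrm v ^ 2)
        = (if i = a then wU k i * x b / nrm v else 0)
          - v i * wU k i * (v a * x b) / nrm v ^ 3 := by
      intro i
      by_cases h : i = a <;> simp only [h, if_true, if_false] <;> field_simp <;> ring
    rw [Finset.sum_congr rfl fun i _ => hterm i, Finset.sum_sub_distrib]
    rw [Finset.sum_ite_eq' univ a fun i => wU k i * x b / nrm v]
    simp only [mem_univ, if_true]
    rw [← Finset.sum_div, ← Finset.sum_mul]
    field_simp
  -- step 5 : cross entropy rewrite
  have hce : ∀ ξ : Fin N → ℝ, crossEntropy y ξ = Real.log (∑ j, Real.exp (ξ j)) - ξ y := by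
    intro ξ
    have hS : 0 < ∑ j, Real.exp (ξ j) :=
      Finset.sum_pos (fun j _ => Real.exp_pos _) ⟨y, mem_univ _⟩
    unfold crossEntropy softmax
    rw [Real.log_div (Real.exp_ne_zero _) hS.ne', Real.log_exp]
    ring
  set ξ₀ : Fin N → ℝ := fun k => ∑ i, wU k i * (v i / nrm v) with hξ₀
  set S₀ : ℝ := ∑ j, Real.exp (ξ₀ j) with hS₀
  have hS₀pos : 0 < S₀ := Finset.sum_pos (fun j _ => Real.exp_pos _) ⟨y, mem_univ _⟩
  set D : Fin N → ℝ := fun k =>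
    (wU k a - v a * (∑ i, v i * wU k i) / nrm v ^ 2) * x b / nrm v with hD
  -- step 6 : derivative of log-sum-exp
  have hsum : HasDerivAt (fun s => ∑ j, Real.exp (∑ i, wU j i *
        (mulVec' (updEntry W a b s) x i / nrm (mulVec' (updEntry W a b s) x))))
      (∑ j, Real.exp (ξ₀ j) * D j) (W a b) := by
    refine HasDerivAt.fun_sum fun j _ => ?_
    have h2 := (hxi j).exp
    simp only [hupd] at h2
    exact h2
  have hsval : ∑ j, Real.exp (∑ i, wU j i *
      (mulVec' (updEntry W a b (W a b)) x i / nrm (mulVec' (updEntry W a b (W a b)) x))) = S₀ := by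
    rw [hupd]
  have hlse : HasDerivAt (fun s => Real.log (∑ j, Real.exp (∑ i, wU j i *
        (mulVec' (updEntry W a b s) x i / nrm (mulVec' (updEntry W a b s) x)))))
      ((∑ j, Real.exp (ξ₀ j) * D j) / S₀) (W a b) := by
    have h2 := hsum.log (by rw [hsval]; exact hS₀pos.ne')
    rw [hsval] at h2
    exact h2
  -- step 7 : combine
  have hmain := hlse.fun_sub (hxi y)
  have hfun : (fun s : ℝ => crossEntropy y (fun k => ∑ i, wU k i *
        (mulVec' (updEntry W a b s) x i / nrm (mulVec' (updEntry W a b s) x))))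
      = fun s => Real.log (∑ j, Real.exp (∑ i, wU j i *
        (mulVec' (updEntry W a b s) x i / nrm (mulVec' (updEntry W a b s) x))))
        - ∑ i, wU y i * (mulVec' (updEntry W a b s) x i / nrm (mulVec' (updEntry W a b s) x)) := by
    funext s
    rw [hce]
  rw [hfun]
  refine hmain.congr_deriv (Eq.symm ?_)
  -- step 8 : final algebra on the derivative
  have hsm : ∀ k, softmax (fun k' => ∑ i, wU k' i * (v i / nrm v)) k = Real.exp (ξ₀ k) / S₀ := by
    intro k
    rw [softmax]
  rw [Finset.sum_congr rfl fun k _ => show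
      (softmax (fun k' => ∑ i, wU k' i * (v i / nrm v)) k - (if y = k then 1 else 0)) * D k
      = Real.exp (ξ₀ k) * D k / S₀ - (if y = k then D k else 0) by
    rw [hsm k]
    by_cases h : y = k <;> simp [h] <;> ring]
  rw [Finset.sum_sub_distrib, ← Finset.sum_div, Finset.sum_ite_eq univ y D]
  simp
  rfl

open Classical in
/-- for the layer-normalized loss `L(W) = E[ℓ(y, W_U (Wx/‖Wx‖))]`, the
gradient (stated entrywise) equals
`∑_k E_x[((p̂_W(k|x) - p(y=k|x))/‖Wx‖) (I - (Wx)(Wx)^⊤/‖Wx‖²) w_U(k) x^⊤]`. -/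
theorem grad_layernorm_loss {N d : ℕ} {Ω : Type} [Fintype Ω]
    (p : Ω → ℝ) (hp0 : ∀ ω, 0 ≤ p ω) (hp1 : ∑ ω, p ω = 1)
    (X : Ω → Fin d → ℝ) (Y : Ω → Fin N)
    (wU : Fin N → Fin d → ℝ) (W : Fin d → Fin d → ℝ)
    -- Wx ≠ 0 almost surely
    (hW0 : ∀ ω, 0 < p ω → mulVec' W (X ω) ≠ 0)
    (L : (Fin d → Fin d → ℝ) → ℝ)
    (hL : ∀ V, L V = ∑ ω, p ω * crossEntropy (Y ω)
      (fun k => ∑ i, wU k i * (mulVec' V (X ω) i / nrm (mulVec' V (X ω)))))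
    -- p̂_W(k|x) = σ(W_U (Wx/‖Wx‖))_k
    (phat : Ω → Fin N → ℝ)
    (hphat : ∀ ω k, phat ω k = softmax
      (fun k' => ∑ i, wU k' i * (mulVec' W (X ω) i / nrm (mulVec' W (X ω)))) k)
    -- the conditional probability p(y=k|x)
    (pcond : Ω → Fin N → ℝ)
    (hpcond : ∀ ω k, pcond ω k =
      (∑ ω' ∈ univ.filter (fun ω' => X ω' = X ω ∧ Y ω' = k), p ω') /
      (∑ ω' ∈ univ.filter (fun ω' => X ω' = X ω), p ω')) :
    ∀ a b, HasDerivAt (fun s : ℝ => L (updEntry W a b s))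
      (∑ k, ∑ ω, p ω * ((phat ω k - pcond ω k) / nrm (mulVec' W (X ω))) *
        ((wU k a - mulVec' W (X ω) a *
            (∑ i, mulVec' W (X ω) i * wU k i) / (nrm (mulVec' W (X ω))) ^ 2) *
          X ω b)) (W a b) := by
  intro a b
  classical
  have key : ∀ ω : Ω, HasDerivAt (fun s : ℝ => p ω * crossEntropy (Y ω)
      (fun k => ∑ i, wU k i * (mulVec' (updEntry W a b s) (X ω) i /
        nrm (mulVec' (updEntry W a b s) (X ω)))))
      (p ω * ∑ k, (phat ω k - (if Y ω = k then 1 else 0)) *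
        ((wU k a - mulVec' W (X ω) a * (∑ i, mulVec' W (X ω) i * wU k i) /
          (nrm (mulVec' W (X ω))) ^ 2) * X ω b / nrm (mulVec' W (X ω)))) (W a b) := by
    intro ω
    rcases eq_or_lt_of_le (hp0 ω) with hp | hp
    · simp only [← hp, zero_mul]
      exact hasDerivAt_const _ 0
    · have h1 := (per_omega_deriv wU W (X ω) (Y ω) a b (hW0 ω hp)).const_mul (p ω)
      refine h1.congr_deriv (Eq.symm (congrArg (p ω * ·) ?_))
      refine Finset.sum_congr rfl fun k _ => ?_
      rw [hphat ω k]
  have hfun : (fun s : ℝ => L (updEntry W a b s))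
      = fun s : ℝ => ∑ ω, p ω * crossEntropy (Y ω)
        (fun k => ∑ i, wU k i * (mulVec' (updEntry W a b s) (X ω) i /
          nrm (mulVec' (updEntry W a b s) (X ω)))) := by
    funext s
    rw [hL]
  have hderiv : HasDerivAt (fun s : ℝ => L (updEntry W a b s))
      (∑ ω, p ω * ∑ k, (phat ω k - (if Y ω = k then 1 else 0)) *
        ((wU k a - mulVec' W (X ω) a * (∑ i, mulVec' W (X ω) i * wU k i) /
          (nrm (mulVec' W (X ω))) ^ 2) * X ω b / nrm (mulVec' W (X ω)))) (W a b) := by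
    rw [hfun]
    exact HasDerivAt.fun_sum fun ω _ => key ω
  convert hderiv using 1
  rw [Finset.sum_congr rfl fun ω (_ : ω ∈ (univ : Finset Ω)) => Finset.mul_sum
    (univ : Finset (Fin N)) (fun k => (phat ω k - (if Y ω = k then 1 else 0)) *
      ((wU k a - mulVec' W (X ω) a * (∑ i, mulVec' W (X ω) i * wU k i) /
        (nrm (mulVec' W (X ω))) ^ 2) * X ω b / nrm (mulVec' W (X ω)))) (p ω)]
  conv_rhs => rw [Finset.sum_comm]
  refine Finset.sum_congr rfl fun k _ => ?_
  set C : Ω → ℝ := fun ω =>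
    (wU k a - mulVec' W (X ω) a * (∑ i, mulVec' W (X ω) i * wU k i) /
      (nrm (mulVec' W (X ω))) ^ 2) * X ω b / nrm (mulVec' W (X ω)) with hC
  have hGk : ∀ ω ω', X ω = X ω' → C ω = C ω' := by
    intro ω ω' h
    rw [hC]
    simp only [h]
  have hcond := cond_sum_eq p hp0 X Y k C hGk pcond (fun ω => hpcond ω k)
  calc ∑ ω, p ω * ((phat ω k - pcond ω k) / nrm (mulVec' W (X ω))) *
        ((wU k a - mulVec' W (X ω) a * (∑ i, mulVec' W (X ω) i * wU k i) /
          (nrm (mulVec' W (X ω))) ^ 2) * X ω b)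
      = ∑ ω, (p ω * phat ω k * C ω - p ω * pcond ω k * C ω) := by
        refine Finset.sum_congr rfl fun ω _ => ?_
        rw [hC]
        ring
    _ = (∑ ω, p ω * phat ω k * C ω) - ∑ ω, p ω * pcond ω k * C ω :=
        Finset.sum_sub_distrib ..
    _ = (∑ ω, p ω * phat ω k * C ω) - ∑ ω, p ω * (if Y ω = k then 1 else 0) * C ω := by
        rw [hcond]
    _ = ∑ ω, (p ω * phat ω k * C ω - p ω * (if Y ω = k then 1 else 0) * C ω) :=
        (Finset.sum_sub_distrib ..).symm
    _ = ∑ ω, p ω * ((phat ω k - (if Y ω = k then 1 else 0)) * C ω) :=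
        Finset.sum_congr rfl fun ω _ => by ring
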